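/- The complementary map of a ReMAD channel with transition matrix Γ is, up to the isometry identifying environment basis states with system basis states, itself a ReMAD channel with transition matrix Γ̃ whose entries are γ̃_{j,k} = γ_{j,j-k}; equivalently, the complementary Kraus operators Q^{(i)} = Σ_{l=0}^{d-i-1} √(γ_{i+l,i}) |l⟩⟨i+l| equal the ReMAD Kraus operators K̃^{(i)} built from Γ̃. -/

import Mathlib

open scoped BigOperators
open Matrix

/-- ReMAD Kraus operator for a transition matrix `Δ`:
`K_Δ^{(i)} = Σ_{l=0}^{d-i-1} √(δ_{i+l,l}) |l⟩⟨i+l|`. -/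
noncomputable def remadKraus (d : ℕ) (δ : ℕ → ℕ → ℝ) (i : Fin d) :
    Matrix (Fin d) (Fin d) ℂ :=
  Matrix.of fun a b => if (b : ℕ) = (i : ℕ) + (a : ℕ) then ((Real.sqrt (δ b a) : ℝ) : ℂ) else 0

/-- Complementary Kraus operator `Q^{(i)} = Σ_{l=0}^{d-i-1} √(γ_{i+l,i}) |l⟩⟨i+l|`
(written, via the isometry identifying environment basis states with system basis
states, as a `d × d` matrix). -/
noncomputable def remadComplKraus (d : ℕ) (γ : ℕ → ℕ → ℝ) (i : Fin d) :
    Matrix (Fin d) (Fin d) ℂ :=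
  Matrix.of fun a b => if (b : ℕ) = (i : ℕ) + (a : ℕ) then ((Real.sqrt (γ b i) : ℝ) : ℂ) else 0

/-- The complementary map of a ReMAD channel is (up to the system–environment isometry)
itself a ReMAD channel, with transition matrix `Γ̃` given by `γ̃_{j,k} = γ_{j,j-k}`:
the complementary Kraus operators `Q^{(i)}` equal the ReMAD Kraus operators built from `Γ̃`. -/
theorem remad_complementary_is_remad (d : ℕ) (hd : 1 ≤ d) (γ : ℕ → ℕ → ℝ)
    (hnn : ∀ j k : ℕ, k ≤ j → j < d → 0 ≤ γ j k)
    (hsum : ∀ j : ℕ, j < d → ∑ k ∈ Finset.range (j + 1), γ j k = 1) :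
    ∀ i : Fin d, remadComplKraus d γ i = remadKraus d (fun j k => γ j (j - k)) i := by
  intro i
  ext a b
  simp only [remadComplKraus, remadKraus, Matrix.of_apply]
  split_ifs with h
  · rw [h]; simp [Nat.add_sub_cancel]
  · rfl
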